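/- For each j ∈ I₁ = {m+1,…,m+n}, the q-derivative ∂_j on Ω_q(m|n) is a (Θ(−ε_j)τ_j, 1)-derivation: ∂_j(a·b) = ∂_j(a)·b + (Θ(−ε_j)τ_j)(a)·∂_j(b) for all a, b ∈ Ω_q(m|n). -/

import Mathlib

/-- Balanced quantum binomial coefficient `[n choose r]_q` via the Pascal recurrence. -/
noncomputable def qbin {k : Type*} [Field k] (q : k) : ℕ → ℕ → k
  | _, 0 => 1
  | 0, _ + 1 => 0
  | n + 1, r + 1 =>
      q ^ ((r : ℤ) + 1 - ((n : ℤ) + 1)) * qbin q n r + q ^ ((r : ℤ) + 1) * qbin q n (r + 1)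

/-- The `∗`-product on `ℤ₊^m`. -/
def starN {m : ℕ} (β γ : Fin m → ℕ) : ℕ :=
  ∑ p ∈ Finset.univ.filter (fun p : Fin m × Fin m => p.2 < p.1), β p.1 * γ p.2

/-- Index set of the monomial basis of `Ω_q(m|n)`. -/
abbrev OmegaIdx (m n : ℕ) := (Fin m → ℕ) × (Fin n → ℕ)

/-- Underlying vector space of `Ω_q(m|n)`. -/
abbrev Omega (k : Type*) [Field k] (m n : ℕ) := OmegaIdx m n →₀ k

/-- Multiplication of the quantum Grassmann superalgebra `Ω_q(m|n)`. -/
noncomputable def Omul {k : Type*} [Field k] (q : k) {m n : ℕ}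
    (f g : Omega k m n) : Omega k m n :=
  f.sum fun p a => g.sum fun r b =>
    Finsupp.single (p.1 + r.1, p.2 + r.2)
      (a * b * (if ∀ j, p.2 j + r.2 j ≤ 1 then 1 else 0) *
        q ^ ((∑ j, p.2 j) * (∑ i, r.1 i) + starN p.1 r.1) *
        (∏ i, qbin q (p.1 i + r.1 i) (p.1 i)) * (-q) ^ starN p.2 r.2)

/-- Diagonal operator on `Ω_q(m|n)` multiplying the basis vector indexed by `p`
by the scalar `c p`. -/
noncomputable def diagOp {k : Type*} [Field k] (m n : ℕ) (c : OmegaIdx m n → k) :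
    Omega k m n →ₗ[k] Omega k m n :=
  Finsupp.lsum k fun p =>
    LinearMap.toSpanSingleton k (Omega k m n) (c p • Finsupp.single p 1)

/-- The twist `Θ(−ε_j)τ_j` (`j ∈ I₁`): the basis vector `x^(β)⊗x^μ` is multiplied
by `(−q)^{μ∗ε_j − ε_j∗μ} q^{−|β|} (−1)^{μ_j}`. -/
noncomputable def ThetaTau {k : Type*} [Field k] (q : k) (m n : ℕ) (j : Fin n) :
    Omega k m n →ₗ[k] Omega k m n :=
  diagOp m n fun p =>
    (-q) ^ ((∑ t ∈ Finset.univ.filter (fun t : Fin n => j < t), (p.2 t : ℤ)) -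
        (∑ t ∈ Finset.univ.filter (fun t : Fin n => t < j), (p.2 t : ℤ))) *
      q ^ (-(∑ s, (p.1 s : ℤ))) * (-1 : k) ^ (p.2 j)

/-- The `q`-derivative `∂_j` for `j ∈ I₁`:
`∂_j(x^(β)⊗x^μ) = q^{−ε_j∗β}(−q)^{−ε_j∗μ} δ_{μ_j,1} x^(β)⊗x^{μ−ε_j}`. -/
noncomputable def Dn {k : Type*} [Field k] (q : k) (m n : ℕ) (j : Fin n) :
    Omega k m n →ₗ[k] Omega k m n :=
  Finsupp.lsum k fun p => LinearMap.toSpanSingleton k (Omega k m n)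
    (if p.2 j = 1 then
      (q ^ (-(∑ s, (p.1 s : ℤ))) *
          (-q) ^ (-(∑ t ∈ Finset.univ.filter (fun t : Fin n => t < j), (p.2 t : ℤ)))) •
        Finsupp.single (p.1, p.2 - Pi.single j 1) 1
     else 0)

section Helpers
variable {k : Type*} [Field k] (q : k) {m n : ℕ}

/-- Coefficient of the product of two basis monomials. -/
noncomputable def Ocoef (p r : OmegaIdx m n) : k :=
  (if ∀ j, p.2 j + r.2 j ≤ 1 then 1 else 0) *
    q ^ ((∑ j, p.2 j) * (∑ i, r.1 i) + starN p.1 r.1) *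
    (∏ i, qbin q (p.1 i + r.1 i) (p.1 i)) * (-q) ^ starN p.2 r.2

lemma Omul_zero_left (g : Omega k m n) : Omul q 0 g = 0 := Finsupp.sum_zero_index

lemma Omul_zero_right (f : Omega k m n) : Omul q f 0 = 0 := by
  simp [Omul]

lemma Omul_add_left (f₁ f₂ g : Omega k m n) :
    Omul q (f₁ + f₂) g = Omul q f₁ g + Omul q f₂ g := by
  unfold Omul
  refine Finsupp.sum_add_index' (fun p => ?_) (fun p b₁ b₂ => ?_)
  · simp
  · rw [← Finsupp.sum_add]; congr 1; funext r b
    rw [← Finsupp.single_add]; congr 1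
    split_ifs <;> ring

lemma Omul_add_right (f g₁ g₂ : Omega k m n) :
    Omul q f (g₁ + g₂) = Omul q f g₁ + Omul q f g₂ := by
  unfold Omul
  rw [← Finsupp.sum_add]
  congr 1; funext p a
  refine Finsupp.sum_add_index' (fun r => ?_) (fun r b₁ b₂ => ?_)
  · simp
  · rw [← Finsupp.single_add]; congr 1
    split_ifs <;> ring

lemma Omul_single_single (p r : OmegaIdx m n) (a b : k) :
    Omul q (Finsupp.single p a) (Finsupp.single r b) =
      (a * b * Ocoef q p r) • Finsupp.single (p.1 + r.1, p.2 + r.2) (1 : k) := by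
  unfold Omul
  rw [Finsupp.sum_single_index, Finsupp.sum_single_index]
  · rw [Finsupp.smul_single, smul_eq_mul, mul_one, Ocoef]; ring_nf
  · simp
  · simp

lemma Dn_single (j : Fin n) (p : OmegaIdx m n) (c : k) :
    Dn q m n j (Finsupp.single p c) =
      if p.2 j = 1 then
        (c * (q ^ (-(∑ s, (p.1 s : ℤ))) *
          (-q) ^ (-(∑ t ∈ Finset.univ.filter (fun t : Fin n => t < j), (p.2 t : ℤ))))) •
        Finsupp.single (p.1, p.2 - Pi.single j 1) (1 : k)
      else 0 := by
  rw [Dn, Finsupp.lsum_single, LinearMap.toSpanSingleton_apply, smul_ite, smul_smul, smul_zero]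

lemma ThetaTau_single (j : Fin n) (p : OmegaIdx m n) (c : k) :
    ThetaTau q m n j (Finsupp.single p c) =
      (c * ((-q) ^ ((∑ t ∈ Finset.univ.filter (fun t : Fin n => j < t), (p.2 t : ℤ)) -
        (∑ t ∈ Finset.univ.filter (fun t : Fin n => t < j), (p.2 t : ℤ))) *
        q ^ (-(∑ s, (p.1 s : ℤ))) * (-1 : k) ^ (p.2 j))) • Finsupp.single p (1 : k) := by
  rw [ThetaTau, diagOp, Finsupp.lsum_single, LinearMap.toSpanSingleton_apply, smul_smul]

lemma Omul_smul_left (c : k) (f g : Omega k m n) :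
    Omul q (c • f) g = c • Omul q f g := by
  unfold Omul
  rw [Finsupp.sum_smul_index, Finsupp.smul_sum]
  · congr 1; funext p a
    rw [Finsupp.smul_sum]
    congr 1; funext r b
    rw [Finsupp.smul_single, smul_eq_mul]; ring_nf
  · intro p; simp

lemma Omul_smul_right (c : k) (f g : Omega k m n) :
    Omul q f (c • g) = c • Omul q f g := by
  unfold Omul
  rw [Finsupp.smul_sum]
  congr 1; funext p a
  rw [Finsupp.sum_smul_index, Finsupp.smul_sum]
  · congr 1; funext r b
    rw [Finsupp.smul_single, smul_eq_mul]; ring_nf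
  · intro r; simp

end Helpers

section Comb
variable {n : ℕ} (j : Fin n) (μ ν : Fin n → ℕ)
variable {n : ℕ} (j : Fin n) (μ ν : Fin n → ℕ)

lemma starN_add_left (a b ν : Fin n → ℕ) : starN (a + b) ν = starN a ν + starN b ν := by
  simp [starN, add_mul, Finset.sum_add_distrib]

lemma starN_add_right (μ a b : Fin n → ℕ) : starN μ (a + b) = starN μ a + starN μ b := by
  simp [starN, mul_add, Finset.sum_add_distrib]

lemma starN_single_left : starN (Pi.single j 1) ν = ∑ t ∈ Finset.univ.filter (fun t => t < j), ν t := by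
  rw [starN, Finset.sum_filter, Fintype.sum_prod_type]
  simp only [Pi.single_apply]
  rw [Finset.sum_eq_single j]
  · simp [Finset.sum_filter]
  · intro s _ hs; simp [hs]
  · simp

lemma starN_single_right : starN μ (Pi.single j 1) = ∑ t ∈ Finset.univ.filter (fun t => j < t), μ t := by
  rw [starN, Finset.sum_filter, Fintype.sum_prod_type_right]
  simp only [Pi.single_apply]
  rw [Finset.sum_eq_single j]
  · simp [Finset.sum_filter]
  · intro s _ hs; simp [hs]
  · simp

lemma sub_single_add (h : μ j = 1) : (μ - Pi.single j 1) + Pi.single j 1 = μ := by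
  funext t
  rcases eq_or_ne t j with rfl | ht
  · simp [Pi.sub_apply, Pi.single_apply, h]
  · simp [Pi.sub_apply, Pi.single_apply, ht]

lemma sum_sub_single (h : μ j = 1) :
    (∑ t, μ t) = (∑ t, (μ - Pi.single j 1 : Fin n → ℕ) t) + 1 := by
  conv_lhs => rw [← sub_single_add j μ h]
  simp [Finset.sum_add_distrib, Pi.single_apply]

lemma sub_single_apply_ne {t : Fin n} (ht : t ≠ j) : (μ - Pi.single j 1 : Fin n → ℕ) t = μ t := by
  simp [Pi.sub_apply, Pi.single_apply, ht]

lemma sub_single_apply_self (h : μ j = 1) : (μ - Pi.single j 1 : Fin n → ℕ) j = 0 := by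
  simp [Pi.sub_apply, h]

lemma starN_sub_left (h : μ j = 1) :
    starN μ ν = starN (μ - Pi.single j 1) ν + ∑ t ∈ Finset.univ.filter (fun t => t < j), ν t := by
  conv_lhs => rw [← sub_single_add j μ h]
  rw [starN_add_left, starN_single_left]

lemma starN_sub_right (h : ν j = 1) :
    starN μ ν = starN μ (ν - Pi.single j 1) + ∑ t ∈ Finset.univ.filter (fun t => j < t), μ t := by
  conv_lhs => rw [← sub_single_add j ν h]
  rw [starN_add_right, starN_single_right]

lemma sum_filter_lt_sub (h : μ j = 1) :
    ∑ t ∈ Finset.univ.filter (fun t => t < j), (μ - Pi.single j 1 : Fin n → ℕ) t =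
      ∑ t ∈ Finset.univ.filter (fun t => t < j), μ t := by
  refine Finset.sum_congr rfl fun t ht => ?_
  simp only [Finset.mem_filter] at ht
  exact sub_single_apply_ne j μ (ne_of_lt ht.2)

lemma sum_filter_gt_sub (h : μ j = 1) :
    ∑ t ∈ Finset.univ.filter (fun t => j < t), (μ - Pi.single j 1 : Fin n → ℕ) t =
      ∑ t ∈ Finset.univ.filter (fun t => j < t), μ t := by
  refine Finset.sum_congr rfl fun t ht => ?_
  simp only [Finset.mem_filter] at ht
  exact sub_single_apply_ne j μ (ne_of_gt ht.2)

end Comb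

section Key
variable {k : Type*} [Field k]

lemma key (q : k) (hq : q ≠ 0) {m n : ℕ} (j : Fin n)
    (β γ : Fin m → ℕ) (μ ν : Fin n → ℕ) (c d : k) :
    Dn q m n j (Omul q (Finsupp.single (β, μ) c) (Finsupp.single (γ, ν) d)) =
      Omul q (Dn q m n j (Finsupp.single (β, μ) c)) (Finsupp.single (γ, ν) d) +
      Omul q (ThetaTau q m n j (Finsupp.single (β, μ) c)) (Dn q m n j (Finsupp.single (γ, ν) d)) := by
  rw [Omul_single_single, map_smul, Dn_single, Dn_single, Dn_single, ThetaTau_single,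
    Omul_smul_left]
  dsimp only
  have hq' : (-q) ≠ 0 := neg_ne_zero.mpr hq
  by_cases h1 : μ j = 1 <;> by_cases h2 : ν j = 1
  · -- μ j = 1, ν j = 1 : cancellation
    rw [if_pos h1, if_pos h2, if_neg (show ¬((μ + ν) j = 1) by simp [Pi.add_apply]; omega),
      smul_zero, Omul_smul_left, Omul_smul_right, Omul_single_single, Omul_single_single]
    dsimp only
    have hidx : (μ - Pi.single j 1) + ν = μ + (ν - Pi.single j 1) := by
      funext t
      rcases eq_or_ne t j with rfl | ht
      · simp [Pi.add_apply, Pi.sub_apply, Pi.single_apply, h1, h2]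
      · simp [Pi.add_apply, Pi.sub_apply, Pi.single_apply, ht]
    rw [hidx, smul_smul, smul_smul, smul_smul, ← add_smul]
    refine (smul_eq_zero_of_left ?_ _).symm
    have e4 := sum_sub_single j μ h1
    have e5 := starN_sub_left j μ ν h1
    have e6 := starN_sub_right j μ ν h2
    have h7 : starN (μ - Pi.single j 1) ν +
        (∑ t ∈ Finset.filter (fun t => t < j) Finset.univ, ν t) =
        starN μ (ν - Pi.single j 1) +
        (∑ t ∈ Finset.filter (fun t => j < t) Finset.univ, μ t) := by omega
    simp only [Ocoef]
    have hcond : (∀ t, (μ - Pi.single j 1 : Fin n → ℕ) t + ν t ≤ 1) ↔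
        (∀ t, μ t + (ν - Pi.single j 1 : Fin n → ℕ) t ≤ 1) := by
      refine forall_congr' fun t => ?_
      by_cases ht : t = j
      · subst ht; rw [sub_single_apply_self t μ h1, sub_single_apply_self t ν h2]; omega
      · rw [sub_single_apply_ne j μ ht, sub_single_apply_ne j ν ht]
    by_cases hc : ∀ t, μ t + (ν - Pi.single j 1 : Fin n → ℕ) t ≤ 1
    · rw [if_pos hc, if_pos (hcond.mpr hc), h1, pow_one, e4]
      have hp : (-q) ^ (starN (μ - Pi.single j 1) ν) *
            (-q) ^ (∑ t ∈ Finset.filter (fun t => t < j) Finset.univ, ν t) =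
          (-q) ^ (starN μ (ν - Pi.single j 1)) *
            (-q) ^ (∑ t ∈ Finset.filter (fun t => j < t) Finset.univ, μ t) := by
        rw [← pow_add, ← pow_add, h7]
      simp only [← Nat.cast_sum]
      simp only [zpow_neg, zpow_sub₀ hq', zpow_natCast]
      field_simp
      linear_combination (c * d * (∏ i, qbin q (β i + γ i) (β i)) *
        q ^ ((∑ t, (μ - Pi.single j 1 : Fin n → ℕ) t) * (∑ i, γ i) + starN β γ) *
        q ^ (∑ i, γ i)) * hp
    · rw [if_neg hc, if_neg fun hh => hc (hcond.mp hh)]; ring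
  · -- μ j = 1, ν j ≠ 1
    rw [if_pos h1, if_neg h2, Omul_zero_right, smul_zero, add_zero, Omul_smul_left,
      Omul_single_single]
    rcases Nat.lt_or_ge (ν j) 1 with hv | hv
    · -- ν j = 0 : main Leibniz case A
      have hv0 : ν j = 0 := by omega
      rw [if_pos (show (μ + ν) j = 1 by simp [Pi.add_apply]; omega)]
      dsimp only
      have hidx : μ + ν - Pi.single j 1 = (μ - Pi.single j 1) + ν := by
        funext t
        rcases eq_or_ne t j with rfl | ht
        · simp [Pi.add_apply, Pi.sub_apply, Pi.single_apply, h1, hv0]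
        · simp [Pi.add_apply, Pi.sub_apply, Pi.single_apply, ht]
      rw [hidx, smul_smul, smul_smul]
      congr 1
      have e1 : (∑ s : Fin m, (((β + γ) s : ℕ) : ℤ)) =
          (∑ s, ((β s : ℕ) : ℤ)) + ∑ s, ((γ s : ℕ) : ℤ) := by
        simp [Pi.add_apply, Finset.sum_add_distrib]
      have e2 : (∑ t ∈ Finset.filter (fun t => t < j) Finset.univ, (((μ + ν) t : ℕ) : ℤ)) =
          (∑ t ∈ Finset.filter (fun t => t < j) Finset.univ, ((μ t : ℕ) : ℤ)) +
            ∑ t ∈ Finset.filter (fun t => t < j) Finset.univ, ((ν t : ℕ) : ℤ) := by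
        simp [Pi.add_apply, Finset.sum_add_distrib]
      rw [e1, e2]
      simp only [Ocoef]
      have hcond : (∀ t, μ t + ν t ≤ 1) ↔
          (∀ t, (μ - Pi.single j 1 : Fin n → ℕ) t + ν t ≤ 1) := by
        refine forall_congr' fun t => ?_
        by_cases ht : t = j
        · subst ht; rw [sub_single_apply_self t μ h1]; omega
        · rw [sub_single_apply_ne j μ ht]
      by_cases hc : ∀ t, μ t + ν t ≤ 1
      · rw [if_pos hc, if_pos (hcond.mp hc), starN_sub_left j μ ν h1, sum_sub_single j μ h1]
        simp only [← Nat.cast_sum]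
        simp only [zpow_neg, zpow_add₀ hq, zpow_add₀ hq', zpow_natCast, pow_add]
        field_simp
        ring
      · rw [if_neg hc, if_neg fun hh => hc (hcond.mpr hh)]; ring
    · -- ν j ≥ 2
      have hv2 : 2 ≤ ν j := by omega
      rw [if_neg (show ¬((μ + ν) j = 1) by simp [Pi.add_apply]; omega), smul_zero]
      rw [show Ocoef q (β, μ - Pi.single j 1) (γ, ν) = 0 from ?_]
      · simp
      · rw [Ocoef, if_neg]
        · ring
        · intro hco
          have := hco j
          dsimp only at this
          rw [sub_single_apply_self j μ h1] at this
          omega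
  · -- μ j ≠ 1, ν j = 1
    rw [if_neg h1, if_pos h2, Omul_zero_left, zero_add, Omul_smul_right, Omul_single_single]
    rcases Nat.lt_or_ge (μ j) 1 with hu | hu
    · have hu0 : μ j = 0 := by omega
      rw [if_pos (show (μ + ν) j = 1 by simp [Pi.add_apply]; omega)]
      dsimp only
      have hidx : μ + ν - Pi.single j 1 = μ + (ν - Pi.single j 1) := by
        funext t
        rcases eq_or_ne t j with rfl | ht
        · simp [Pi.add_apply, Pi.sub_apply, Pi.single_apply, h2, hu0]
        · simp [Pi.add_apply, Pi.sub_apply, Pi.single_apply, ht]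
      rw [hidx, smul_smul, smul_smul, smul_smul]
      congr 1
      have e1 : (∑ s : Fin m, (((β + γ) s : ℕ) : ℤ)) =
          (∑ s, ((β s : ℕ) : ℤ)) + ∑ s, ((γ s : ℕ) : ℤ) := by
        simp [Pi.add_apply, Finset.sum_add_distrib]
      have e2 : (∑ t ∈ Finset.filter (fun t => t < j) Finset.univ, (((μ + ν) t : ℕ) : ℤ)) =
          (∑ t ∈ Finset.filter (fun t => t < j) Finset.univ, ((μ t : ℕ) : ℤ)) +
            ∑ t ∈ Finset.filter (fun t => t < j) Finset.univ, ((ν t : ℕ) : ℤ) := by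
        simp [Pi.add_apply, Finset.sum_add_distrib]
      rw [e1, e2, hu0, pow_zero]
      simp only [Ocoef]
      have hcond : (∀ t, μ t + ν t ≤ 1) ↔
          (∀ t, μ t + (ν - Pi.single j 1 : Fin n → ℕ) t ≤ 1) := by
        refine forall_congr' fun t => ?_
        by_cases ht : t = j
        · subst ht; rw [sub_single_apply_self t ν h2]; omega
        · rw [sub_single_apply_ne j ν ht]
      by_cases hc : ∀ t, μ t + ν t ≤ 1
      · rw [if_pos hc, if_pos (hcond.mp hc), starN_sub_right j μ ν h2]
        simp only [← Nat.cast_sum]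
        simp only [zpow_neg, zpow_add₀ hq, zpow_add₀ hq', zpow_sub₀ hq', zpow_natCast, pow_add]
        field_simp
      · rw [if_neg hc, if_neg fun hh => hc (hcond.mpr hh)]; ring
    · have hu2 : 2 ≤ μ j := by omega
      rw [if_neg (show ¬((μ + ν) j = 1) by simp [Pi.add_apply]; omega), smul_zero]
      rw [show Ocoef q (β, μ) (γ, ν - Pi.single j 1) = 0 from ?_]
      · simp
      · rw [Ocoef, if_neg]
        · ring
        · intro hco
          have := hco j
          dsimp only at this
          rw [sub_single_apply_self j ν h2] at this
          omega
  · -- μ j ≠ 1, ν j ≠ 1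
    rw [if_neg h1, if_neg h2, Omul_zero_left, Omul_zero_right, smul_zero, add_zero,
      if_neg (show ¬((μ + ν) j = 1) by simp [Pi.add_apply]; omega), smul_zero]

end Key


/-- For `j ∈ I₁`, the `q`-derivative `∂_j` is a `(Θ(−ε_j)τ_j, 1)`-derivation of
`Ω_q(m|n)`: `∂_j(a·b) = ∂_j(a)·b + (Θ(−ε_j)τ_j)(a)·∂_j(b)`. -/
theorem Dn_twisted_derivation {k : Type*} [Field k] (q : k) (hq : q ≠ 0) (m n : ℕ)
    (j : Fin n) (a b : Omega k m n) :
    Dn q m n j (Omul q a b) =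
      Omul q (Dn q m n j a) b + Omul q (ThetaTau q m n j a) (Dn q m n j b) := by
  induction a using Finsupp.induction_linear with
  | zero => simp [Omul_zero_left, map_zero]
  | add f g hf hg =>
      simp only [Omul_add_left, map_add, hf, hg]
      abel
  | single p c =>
      induction b using Finsupp.induction_linear with
      | zero => simp [Omul_zero_right, map_zero]
      | add f g hf hg =>
          simp only [Omul_add_right, map_add, hf, hg]
          abel
      | single r d =>
          obtain ⟨β, μ⟩ := p; obtain ⟨γ, ν⟩ := r
          exact key q hq j β γ μ ν c d
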